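/- Let p be a pmf on ℕ₀ satisfying (C1)-(C3) with support ℕ₀, and let X : Ω → ℕ₀ be a random variable with E|(Δ⁺p(X)/p(X))·X| < ∞. Then X has pmf p if and only if its probability generating function satisfies G_X(s) = E[-(Δ⁺p(X)/p(X))·(1 - s^{X+1})/(1 - s)] for all s ∈ [0,1). -/

import Mathlib

set_option maxHeartbeats 1000000


private lemma geom_frac {s : ℝ} (hs1 : s < 1) (k : ℕ) :
    (1 - s ^ (k + 1)) / (1 - s) = ∑ j ∈ Finset.range (k + 1), s ^ j := by
  have h1 : (1 : ℝ) - s ≠ 0 := sub_ne_zero.mpr (ne_of_gt hs1)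
  have h2 : s - 1 ≠ 0 := sub_ne_zero.mpr (ne_of_lt hs1)
  rw [geom_sum_eq (ne_of_lt hs1) (k + 1)]
  field_simp
  ring

private lemma swap_lemma (c : ℕ → ℝ) (hc : Summable fun k => |c k| * (k + 1))
    (s : ℝ) (hs0 : 0 ≤ s) (hs1 : s < 1) :
    ∑' k, c k * ((1 - s ^ (k + 1)) / (1 - s)) = ∑' j, s ^ j * (∑' i, c (i + j)) := by
  classical
  set F : ℕ × ℕ → ℝ := fun kj => if kj.2 ≤ kj.1 then c kj.1 * s ^ kj.2 else 0 with hFdef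
  have hrow0 : ∀ k : ℕ, ∀ j ∉ Finset.range (k + 1), F (k, j) = 0 := by
    intro k j hj
    simp only [Finset.mem_range, not_lt] at hj
    simp only [F]
    rw [if_neg (by omega)]
  have hrowsum : ∀ k, ∑' j, F (k, j) = c k * ((1 - s ^ (k + 1)) / (1 - s)) := by
    intro k
    rw [tsum_eq_sum (hrow0 k), geom_frac hs1, Finset.mul_sum]
    refine Finset.sum_congr rfl fun j hj => ?_
    simp only [Finset.mem_range] at hj
    simp only [F]
    rw [if_pos (by omega)]
  have habs : Summable fun kj : ℕ × ℕ => |F kj| := by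
    rw [summable_prod_of_nonneg (fun _ => abs_nonneg _)]
    constructor
    · intro k
      exact summable_of_ne_finset_zero (s := Finset.range (k + 1))
        (fun j hj => by rw [hrow0 k j hj, abs_zero])
    · apply Summable.of_nonneg_of_le (fun k => tsum_nonneg fun j => abs_nonneg _) ?_ hc
      intro k
      rw [tsum_eq_sum (s := Finset.range (k + 1)) (fun j hj => by rw [hrow0 k j hj, abs_zero])]
      have hb : ∀ j ∈ Finset.range (k + 1), |F (k, j)| ≤ |c k| := by
        intro j _
        simp only [F]
        split_ifs
        · rw [abs_mul, abs_pow, abs_of_nonneg hs0]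
          calc |c k| * s ^ j ≤ |c k| * 1 :=
                mul_le_mul_of_nonneg_left (pow_le_one₀ hs0 hs1.le) (abs_nonneg _)
            _ = |c k| := mul_one _
        · simp
      calc ∑ j ∈ Finset.range (k + 1), |F (k, j)| ≤ ∑ j ∈ Finset.range (k + 1), |c k| :=
            Finset.sum_le_sum hb
        _ = |c k| * (k + 1) := by rw [Finset.sum_const, Finset.card_range]; push_cast; ring
  have hF : Summable F := habs.of_abs
  have hcol : ∀ j, ∑' k, F (k, j) = s ^ j * ∑' i, c (i + j) := by
    intro j
    have hinj : Function.Injective (fun i : ℕ => i + j) := add_left_injective j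
    have hsupp : Function.support (fun k => F (k, j)) ⊆ Set.range (fun i : ℕ => i + j) := by
      intro k hk
      simp only [Function.mem_support, F] at hk
      by_cases h : j ≤ k
      · exact ⟨k - j, show k - j + j = k by omega⟩
      · rw [if_neg (by omega)] at hk; exact absurd rfl hk
    rw [← hinj.tsum_eq hsupp]
    have hterm : ∀ i : ℕ, F (i + j, j) = c (i + j) * s ^ j := by
      intro i
      simp only [F]
      rw [if_pos (by omega)]
    rw [show (∑' i, F ((fun i : ℕ => i + j) i, j)) = ∑' i, c (i + j) * s ^ j from
      tsum_congr hterm, tsum_mul_right, mul_comm]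
  calc ∑' k, c k * ((1 - s ^ (k + 1)) / (1 - s)) = ∑' k, ∑' j, F (k, j) :=
        tsum_congr fun k => (hrowsum k).symm
    _ = ∑' j, ∑' k, F (k, j) := (Summable.tsum_comm (f := fun k j => F (k, j)) hF).symm
    _ = ∑' j, s ^ j * ∑' i, c (i + j) := tsum_congr hcol


private lemma coeff_eq_zero (d : ℕ → ℝ) (B : ℝ) (hB : ∀ j, |d j| ≤ B)
    (h : ∀ s : ℝ, 0 ≤ s → s < 1 → ∑' j, s ^ j * d j = 0) :
    ∀ n, d n = 0 := by
  intro n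
  induction n using Nat.strong_induction_on with
  | _ n ih =>
  have hB0 : 0 ≤ B := le_trans (abs_nonneg _) (hB 0)
  have key : ∀ s : ℝ, 0 < s → s ≤ 1 / 2 → |d n| ≤ 2 * B * s := by
    intro s hs0 hs2
    have hs1 : s < 1 := by linarith
    have hsum : Summable fun j => s ^ j * d j := by
      apply Summable.of_abs
      apply Summable.of_nonneg_of_le (fun j => abs_nonneg _) (fun j => ?_)
        (((summable_geometric_of_lt_one hs0.le hs1)).mul_left B)
      rw [abs_mul, abs_pow, abs_of_nonneg hs0.le, mul_comm]
      exact mul_le_mul_of_nonneg_right (hB j) (pow_nonneg hs0.le j)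
    have h1 := Summable.sum_add_tsum_nat_add (n + 1) hsum
    rw [h s hs0.le hs1] at h1
    have h2 : ∑ i ∈ Finset.range (n + 1), s ^ i * d i = s ^ n * d n := by
      rw [Finset.sum_range_succ, Finset.sum_eq_zero
        (fun i hi => by rw [ih i (Finset.mem_range.mp hi), mul_zero]), zero_add]
    rw [h2] at h1
    have h3 : s ^ n * d n = -∑' i, s ^ (i + (n + 1)) * d (i + (n + 1)) := by linarith
    have htail : Summable fun i => s ^ (i + (n + 1)) * d (i + (n + 1)) :=
      (summable_nat_add_iff (n + 1)).2 hsum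
    have hgeo : Summable fun i : ℕ => B * s ^ (n + 1) * s ^ i :=
      (summable_geometric_of_lt_one hs0.le hs1).mul_left _
    have hnorm : Summable fun i => ‖s ^ (i + (n + 1)) * d (i + (n + 1))‖ := by
      simpa only [Real.norm_eq_abs] using htail.abs
    have h4 : |∑' i, s ^ (i + (n + 1)) * d (i + (n + 1))| ≤ 2 * B * s ^ (n + 1) := by
      calc |∑' i, s ^ (i + (n + 1)) * d (i + (n + 1))|
          ≤ ∑' i, ‖s ^ (i + (n + 1)) * d (i + (n + 1))‖ := norm_tsum_le_tsum_norm hnorm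
        _ ≤ ∑' i : ℕ, B * s ^ (n + 1) * s ^ i := by
            apply Summable.tsum_le_tsum _ hnorm hgeo
            intro i
            rw [Real.norm_eq_abs, abs_mul, abs_pow, abs_of_nonneg hs0.le, pow_add]
            calc s ^ i * s ^ (n + 1) * |d (i + (n + 1))|
                ≤ s ^ i * s ^ (n + 1) * B := by
                  apply mul_le_mul_of_nonneg_left (hB _)
                  positivity
              _ = B * s ^ (n + 1) * s ^ i := by ring
        _ = B * s ^ (n + 1) * (1 - s)⁻¹ := by
            rw [tsum_mul_left, tsum_geometric_of_lt_one hs0.le hs1]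
        _ ≤ 2 * B * s ^ (n + 1) := by
            have hinv : (1 - s)⁻¹ ≤ 2 := by
              rw [inv_le_comm₀ (by linarith) (by norm_num)]
              linarith
            calc B * s ^ (n + 1) * (1 - s)⁻¹ ≤ B * s ^ (n + 1) * 2 :=
                  mul_le_mul_of_nonneg_left hinv (by positivity)
              _ = 2 * B * s ^ (n + 1) := by ring
    have h5 : s ^ n * |d n| ≤ s ^ n * (2 * B * s) := by
      have habs : |s ^ n * d n| ≤ 2 * B * s ^ (n + 1) := by rw [h3, abs_neg]; exact h4
      rw [abs_mul, abs_pow, abs_of_nonneg hs0.le] at habs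
      calc s ^ n * |d n| ≤ 2 * B * s ^ (n + 1) := habs
        _ = s ^ n * (2 * B * s) := by ring
    exact le_of_mul_le_mul_left h5 (pow_pos hs0 n)
  by_contra hd
  have hpos : 0 < |d n| := abs_pos.mpr hd
  have hspos : 0 < min (1 / 2) (|d n| / (4 * B + 1)) := by
    apply lt_min (by norm_num)
    positivity
  have hkey := key _ hspos (min_le_left _ _)
  have hle : min (1 / 2) (|d n| / (4 * B + 1)) ≤ |d n| / (4 * B + 1) := min_le_right _ _
  have h6 : |d n| ≤ 2 * B * (|d n| / (4 * B + 1)) :=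
    le_trans hkey (mul_le_mul_of_nonneg_left hle (by linarith))
  have h7 : (0 : ℝ) < 4 * B + 1 := by linarith
  have h8 : 2 * B * (|d n| / (4 * B + 1)) * (4 * B + 1) = 2 * B * |d n| := by
    field_simp
  nlinarith [mul_le_mul_of_nonneg_right h6 h7.le, h8, hpos, hB0,
    mul_nonneg hB0 hpos.le]


/-- Probability generating function characterization (Proposition 4.3) for pmfs on ℕ₀:
X has pmf p iff `G_X(s) = E[-(Δ⁺p(X)/p(X))·(1 - s^{X+1})/(1-s)]` for all `s ∈ [0,1)`. -/
theorem stmt_4 (p ρ : ℕ → ℝ) 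
    (hsupp : ∀ k : ℕ, 0 < p k)
    (hsum : ∑' k : ℕ, p k = 1)
    (hC2 : ∃ M : ℝ, ∀ k : ℕ,
      |(p (k + 1) - p k) * min (∑ ℓ ∈ Finset.range (k + 1), p ℓ)
        (1 - ∑ ℓ ∈ Finset.range (k + 1), p ℓ) / (p k * p (k + 1))| ≤ M)
    (hC3 : Summable (fun k : ℕ => (k : ℝ) * p k))
    (hρnonneg : ∀ k, 0 ≤ ρ k)
    (hρsum : ∑' k : ℕ, ρ k = 1)
    (hint : Summable (fun k : ℕ => |(p (k + 1) - p k) / p k * (k : ℝ)| * ρ k)) :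
    ρ = p ↔ ∀ s : ℝ, 0 ≤ s → s < 1 →
      (∑' k : ℕ, s ^ k * ρ k)
        = ∑' k : ℕ, (-((p (k + 1) - p k) / p k) * ((1 - s ^ (k + 1)) / (1 - s))) * ρ k := by
  have hpsum : Summable p := by
    by_contra h
    rw [tsum_eq_zero_of_not_summable h] at hsum
    norm_num at hsum
  have hρsummable : Summable ρ := by
    by_contra h
    rw [tsum_eq_zero_of_not_summable h] at hρsum
    norm_num at hρsum
  constructor
  · -- forward direction
    intro heq
    rw [heq]
    intro s hs0 hs1
    set c : ℕ → ℝ := fun k => p k - p (k + 1) with hcdef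
    have hs1' : (1 : ℝ) - s ≠ 0 := sub_ne_zero.mpr (ne_of_gt hs1)
    have hc : Summable fun k => |c k| * (k + 1) := by
      have s1 : Summable fun k : ℕ => ((k : ℝ) + 1) * p k := by
        have := hC3.add hpsum
        simpa [add_mul, one_mul] using this
      have s2 : Summable fun k : ℕ => ((k : ℝ) + 1) * p (k + 1) := by
        have := (summable_nat_add_iff (f := fun k : ℕ => (k : ℝ) * p k) 1).2 hC3
        simpa [Nat.cast_add, Nat.cast_one] using this
      apply Summable.of_nonneg_of_le
        (fun k => mul_nonneg (abs_nonneg _) (by positivity)) ?_ (s1.add s2)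
      intro k
      have h1 : |c k| ≤ p k + p (k + 1) := by
        calc |c k| ≤ |p k| + |p (k + 1)| := abs_sub _ _
          _ = p k + p (k + 1) := by
              rw [abs_of_pos (hsupp k), abs_of_pos (hsupp (k + 1))]
      calc |c k| * (k + 1) ≤ (p k + p (k + 1)) * (k + 1) :=
            mul_le_mul_of_nonneg_right h1 (by positivity)
        _ = ((k : ℝ) + 1) * p k + ((k : ℝ) + 1) * p (k + 1) := by ring
    have hT : ∀ j, (∑' i, c (i + j)) = p j := by
      intro j
      have hsm : Summable fun i => c (i + j) :=
        (summable_nat_add_iff (f := c) j).2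
          (((summable_nat_add_iff (f := p) (0)).2 hpsum).sub
            ((summable_nat_add_iff (f := p) 1).2 hpsum) |>.congr
            (fun i => by simp [c]))
      have hpartial : ∀ n : ℕ, ∑ i ∈ Finset.range n, c (i + j) = p j - p (n + j) := by
        intro n
        have := Finset.sum_range_sub' (fun i => p (i + j)) n
        simp only [Nat.zero_add] at this
        rw [← this]
        apply Finset.sum_congr rfl
        intro i _
        simp only [c]
        congr 2
        omega
      have htend : Filter.Tendsto (fun n => p j - p (n + j)) Filter.atTop (nhds (p j)) := by
        have h0 : Filter.Tendsto (fun n : ℕ => p (n + j)) Filter.atTop (nhds 0) :=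
          hpsum.tendsto_atTop_zero.comp (Filter.tendsto_add_atTop_nat j)
        simpa using Filter.Tendsto.sub (tendsto_const_nhds (x := p j)) h0
      have : HasSum (fun i => c (i + j)) (p j) := by
        rw [hsm.hasSum_iff_tendsto_nat]
        simpa only [hpartial] using htend
      exact this.tsum_eq
    calc ∑' k, s ^ k * p k = ∑' j, s ^ j * (∑' i, c (i + j)) := by
          exact tsum_congr fun j => by rw [hT j]
      _ = ∑' k, c k * ((1 - s ^ (k + 1)) / (1 - s)) :=
          (swap_lemma c hc s hs0 hs1).symm
      _ = ∑' k, (-((p (k + 1) - p k) / p k) * ((1 - s ^ (k + 1)) / (1 - s))) * p k := by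
          apply tsum_congr
          intro k
          have hpk : p k ≠ 0 := (hsupp k).ne'
          simp only [c]
          field_simp
          ring
  · -- backward direction
    intro H
    set c : ℕ → ℝ := fun k => (p k - p (k + 1)) / p k * ρ k with hcdef
    set q : ℕ → ℝ := fun k => |(p (k + 1) - p k) / p k| with hqdef
    have habs_c : ∀ k, |c k| = q k * ρ k := by
      intro k
      have h1 : c k = -((p (k + 1) - p k) / p k) * ρ k := by
        simp only [c]; ring
      rw [h1, abs_mul, abs_neg, abs_of_nonneg (hρnonneg k)]
    have hint' : Summable fun k => q k * (k : ℝ) * ρ k := by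
      apply hint.congr
      intro k
      rw [abs_mul, Nat.abs_cast]
    have hqρ : Summable fun k => q k * ρ k := by
      rw [← summable_nat_add_iff 1]
      apply Summable.of_nonneg_of_le
        (fun n => mul_nonneg (abs_nonneg _) (hρnonneg _))
        ?_ ((summable_nat_add_iff 1).2 hint')
      intro n
      have h1 : (1 : ℝ) ≤ ((n + 1 : ℕ) : ℝ) := by push_cast; linarith [Nat.cast_nonneg (α := ℝ) n]
      calc q (n + 1) * ρ (n + 1) = q (n + 1) * 1 * ρ (n + 1) := by ring
        _ ≤ q (n + 1) * ((n + 1 : ℕ) : ℝ) * ρ (n + 1) := by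
            apply mul_le_mul_of_nonneg_right _ (hρnonneg _)
            exact mul_le_mul_of_nonneg_left h1 (abs_nonneg _)
    have hcabs : Summable fun k => |c k| := by
      apply hqρ.congr
      intro k
      rw [habs_c]
    have hc_summ : Summable c := hcabs.of_abs
    have hc : Summable fun k => |c k| * (k + 1) := by
      apply (hint'.add hqρ).congr
      intro k
      rw [habs_c]
      push_cast
      ring
    set B : ℝ := ∑' k, |c k| with hBdef
    have hB0 : 0 ≤ B := tsum_nonneg fun k => abs_nonneg _
    set T : ℕ → ℝ := fun j => ∑' i, c (i + j) with hTdef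
    have hTsm : ∀ j, Summable fun i => c (i + j) :=
      fun j => (summable_nat_add_iff j).2 hc_summ
    have hTbound : ∀ j, |T j| ≤ B := by
      intro j
      have h1 : |T j| ≤ ∑' i, |c (i + j)| := by
        simpa only [Real.norm_eq_abs] using
          norm_tsum_le_tsum_norm (f := fun i => c (i + j))
            (by simpa only [Real.norm_eq_abs] using (hTsm j).abs)
      refine h1.trans ?_
      exact Summable.tsum_le_tsum_of_inj (fun i => i + j) (add_left_injective j)
        (fun k _ => abs_nonneg _) (fun i => le_refl _) (hTsm j).abs hcabs
    set d : ℕ → ℝ := fun j => ρ j - T j with hddef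
    have hρle1 : ∀ j, ρ j ≤ 1 := by
      intro j
      rw [← hρsum]
      exact Summable.le_tsum hρsummable j fun i _ => hρnonneg i
    have hd_bound : ∀ j, |d j| ≤ 1 + B := by
      intro j
      calc |d j| ≤ |ρ j| + |T j| := abs_sub _ _
        _ ≤ 1 + B := by
            have := hTbound j
            have h2 : |ρ j| ≤ 1 := by
              rw [abs_of_nonneg (hρnonneg j)]; exact hρle1 j
            linarith
    have hzero : ∀ s : ℝ, 0 ≤ s → s < 1 → ∑' j, s ^ j * d j = 0 := by
      intro s hs0 hs1
      have hH := H s hs0 hs1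
      have hRHS : (∑' k : ℕ, (-((p (k + 1) - p k) / p k) * ((1 - s ^ (k + 1)) / (1 - s))) * ρ k)
          = ∑' j, s ^ j * T j := by
        rw [show (∑' k : ℕ, (-((p (k + 1) - p k) / p k) * ((1 - s ^ (k + 1)) / (1 - s))) * ρ k)
            = ∑' k, c k * ((1 - s ^ (k + 1)) / (1 - s)) from tsum_congr fun k => by
              simp only [c]; ring]
        exact swap_lemma c hc s hs0 hs1
      have Sρ : Summable fun j => s ^ j * ρ j := by
        apply Summable.of_nonneg_of_le
          (fun j => mul_nonneg (pow_nonneg hs0 _) (hρnonneg j)) ?_ hρsummable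
        intro j
        exact mul_le_of_le_one_left (hρnonneg j) (pow_le_one₀ hs0 hs1.le)
      have ST : Summable fun j => s ^ j * T j := by
        apply Summable.of_abs
        apply Summable.of_nonneg_of_le (fun j => abs_nonneg _) ?_
          ((summable_geometric_of_lt_one hs0 hs1).mul_left B)
        intro j
        rw [abs_mul, abs_pow, abs_of_nonneg hs0, mul_comm]
        exact mul_le_mul_of_nonneg_right (hTbound j) (pow_nonneg hs0 j)
      have hsub : ∑' j, s ^ j * d j = (∑' j, s ^ j * ρ j) - ∑' j, s ^ j * T j := by
        rw [← Summable.tsum_sub Sρ ST]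
        exact tsum_congr fun j => by simp only [d]; ring
      rw [hsub, hH, hRHS, sub_self]
    have hd0 : ∀ j, d j = 0 := coeff_eq_zero d (1 + B) hd_bound hzero
    have hρT : ∀ j, ρ j = T j := by
      intro j
      have := hd0 j
      simp only [d] at this
      linarith
    have hrec : ∀ j, T j = c j + T (j + 1) := by
      intro j
      have h1 := Summable.tsum_eq_zero_add (hTsm j)
      rw [hTdef]
      simp only
      rw [h1, zero_add]
      congr 1
      apply tsum_congr
      intro i
      congr 1
      omega
    have hstep : ∀ j, ρ (j + 1) * p j = ρ j * p (j + 1) := by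
      intro j
      have h1 : ρ j = c j + ρ (j + 1) := by
        rw [hρT j, hrec j, ← hρT (j + 1)]
      have h2 : ρ (j + 1) = ρ j - (p j - p (j + 1)) / p j * ρ j := by
        simp only [c] at h1
        linarith
      rw [h2]
      have hpj : p j ≠ 0 := (hsupp j).ne'
      field_simp
      ring
    have hclaim : ∀ j, ρ j * p 0 = p j * ρ 0 := by
      intro j
      induction j with
      | zero => ring
      | succ j ih =>
        apply mul_right_cancel₀ (hsupp j).ne'
        linear_combination p 0 * hstep j + p (j + 1) * ih
    have hρ0 : ρ 0 = p 0 := by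
      have h1 : ∀ j, ρ j = p j * (ρ 0 / p 0) := by
        intro j
        have := hclaim j
        have hp0 : p 0 ≠ 0 := (hsupp 0).ne'
        field_simp
        linarith
      have h2 : (1 : ℝ) = ρ 0 / p 0 := by
        calc (1 : ℝ) = ∑' j, ρ j := hρsum.symm
          _ = ∑' j, p j * (ρ 0 / p 0) := tsum_congr h1
          _ = (∑' j, p j) * (ρ 0 / p 0) := tsum_mul_right
          _ = ρ 0 / p 0 := by rw [hsum, one_mul]
      have hp0 : p 0 ≠ 0 := (hsupp 0).ne'
      field_simp at h2
      linarith
    funext j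
    have := hclaim j
    rw [hρ0] at this
    exact mul_right_cancel₀ (hsupp 0).ne' (by linarith)
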